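/- Let Q ⊂ ℝ^N be a rational polytope with 0 ∈ int(Q), and define d_Q(x) := inf{t ∈ ℝ_{≥0} : x ∈ tQ} for x ∈ ℝ^N. Define C₂ := sup_{x ∈ ℤ^N} (⌈d_Q(x)⌉ − d_Q(x)). Then C₂ < 1, and C₂ ∈ {0} ∪ [1/2, 1); that is, C₂ never lies in the open interval (0, 1/2). -/

import Mathlib

open Pointwise

/-- The gauge (Minkowski functional) of `Q`: `d_Q(x) = inf {t ≥ 0 | x ∈ tQ}`. -/
noncomputable def polyGauge {N : ℕ} (Q : Set (Fin N → ℝ)) (x : Fin N → ℝ) : ℝ :=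
  sInf {t : ℝ | 0 ≤ t ∧ x ∈ t • Q}

namespace GaugeDefectAux

variable {N : ℕ}

/-- coordinatewise cast of rational vectors to real vectors -/
def cQ (N : ℕ) : (Fin N → ℚ) → (Fin N → ℝ) := fun v i => (v i : ℝ)

lemma cQ_inj : Function.Injective (cQ N) := by
  intro a b h
  funext i
  have h2 : ((a i : ℝ)) = ((b i : ℝ)) := congrFun h i
  exact_mod_cast h2

/-- real linear independence of a finite set of rational vectors (as real vectors) -/
def Indep (T : Finset (Fin N → ℚ)) : Prop :=
  ∀ g : (Fin N → ℚ) → ℝ, ∑ u ∈ T, g u • cQ N u = 0 → ∀ u ∈ T, g u = 0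

/-- the matrix whose columns are the (rational) vectors of `T` -/
def matOf (T : Finset (Fin N → ℚ)) : Matrix (Fin N) {u // u ∈ T} ℚ :=
  fun i u => (u : Fin N → ℚ) i

open Classical in
noncomputable def betaOf (T : Finset (Fin N → ℚ)) : Fin N → ℚ :=
  if h : ∃ P : Matrix {u // u ∈ T} (Fin N) ℚ, P * matOf T = 1 then
    fun i => ∑ u, h.choose u i
  else 0

noncomputable def denOf (T : Finset (Fin N → ℚ)) : ℕ := ∏ i, (betaOf T i).den

lemma denOf_pos (T : Finset (Fin N → ℚ)) : 0 < denOf T :=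
  Finset.prod_pos fun i _ => (betaOf T i).pos

/-- From real independence to a rational left inverse matrix. -/
lemma exists_leftInv {T : Finset (Fin N → ℚ)} (hT : Indep T) :
    ∃ P : Matrix {u // u ∈ T} (Fin N) ℚ, P * matOf T = 1 := by
  classical
  set f : ({u // u ∈ T} → ℚ) →ₗ[ℚ] (Fin N → ℚ) := Matrix.toLin' (matOf T)
  have hker : LinearMap.ker f = ⊥ := by
    rw [LinearMap.ker_eq_bot']
    intro g hg
    have hg' : ∀ i, ∑ u : {u // u ∈ T}, g u * (u : Fin N → ℚ) i = 0 := by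
      intro i
      have := congrFun hg i
      simpa [f, Matrix.toLin'_apply, Matrix.mulVec, dotProduct, matOf,
        mul_comm] using this
    set G : (Fin N → ℚ) → ℝ := fun u => if h : u ∈ T then (g ⟨u, h⟩ : ℝ) else 0 with hG
    have hzero : ∑ u ∈ T, G u • cQ N u = 0 := by
      funext i
      have : ∑ u ∈ T, G u * (cQ N u) i = ((∑ u : {u // u ∈ T}, g u * (u : Fin N → ℚ) i : ℚ) : ℝ) := by
        rw [← Finset.sum_attach T (fun u => G u * (cQ N u) i), Finset.univ_eq_attach]
        push_cast
        refine Finset.sum_congr rfl fun u _ => ?_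
        simp [hG, u.2, cQ]
      have h0 : ∑ u ∈ T, G u * (cQ N u) i = 0 := by
        rw [this, hg' i]; norm_num
      simpa [Finset.sum_apply] using h0
    have := hT G hzero
    funext u
    have hu := this u u.2
    rw [hG] at hu
    simp only [u.2, dif_pos] at hu
    exact_mod_cast hu
  obtain ⟨gl, hgl⟩ := f.exists_leftInverse_of_injective hker
  refine ⟨LinearMap.toMatrix' gl, ?_⟩
  have : LinearMap.toMatrix' gl * LinearMap.toMatrix' f = 1 := by
    rw [← LinearMap.toMatrix'_comp, hgl, LinearMap.toMatrix'_id]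
  rwa [LinearMap.toMatrix'_toLin'] at this

/-- The value formula: if `x = ∑_{u∈T} μ u • u` with `P * matOf T = 1`, then
`∑ μ = ∑ i, x i * β i` where `β i = ∑_u P u i`. -/
lemma sum_eq_beta {T : Finset (Fin N → ℚ)} {P : Matrix {u // u ∈ T} (Fin N) ℚ}
    (hP : P * matOf T = 1) {μ : (Fin N → ℚ) → ℝ} {x : Fin N → ℝ}
    (hrep : ∑ u ∈ T, μ u • cQ N u = x) :
    ∑ u ∈ T, μ u = ∑ i, x i * ((∑ u, P u i : ℚ) : ℝ) := by
  classical
  set Pr : Matrix {u // u ∈ T} (Fin N) ℝ := P.map ((↑) : ℚ → ℝ)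
  set Mr : Matrix (Fin N) {u // u ∈ T} ℝ := (matOf T).map ((↑) : ℚ → ℝ)
  have hPM : Pr * Mr = 1 := by
    ext u v
    have h1 := congrFun (congrFun hP u) v
    rw [Matrix.mul_apply] at h1
    rw [Matrix.mul_apply]
    have h2 := congrArg (fun q : ℚ => (q : ℝ)) h1
    push_cast at h2
    simpa [Pr, Mr, Matrix.map_apply, Matrix.one_apply, apply_ite] using h2
  set μ' : {u // u ∈ T} → ℝ := fun u => μ u
  have hMv : Mr.mulVec μ' = x := by
    funext i
    have : ∑ u ∈ T, μ u * (cQ N u) i = x i := by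
      have := congrFun hrep i
      simpa [Finset.sum_apply] using this
    rw [← Finset.sum_attach T (fun u => μ u * (cQ N u) i)] at this
    simpa [Matrix.mulVec, dotProduct, Mr, matOf, cQ, mul_comm, μ'] using this
  have hμ' : μ' = Pr.mulVec x := by
    calc μ' = (1 : Matrix {u // u ∈ T} {u // u ∈ T} ℝ).mulVec μ' := by
              rw [Matrix.one_mulVec]
    _ = (Pr * Mr).mulVec μ' := by rw [hPM]
    _ = Pr.mulVec (Mr.mulVec μ') := by rw [← Matrix.mulVec_mulVec]
    _ = Pr.mulVec x := by rw [hMv]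
  calc ∑ u ∈ T, μ u = ∑ u ∈ T.attach, μ' u := (Finset.sum_attach T μ).symm
    _ = ∑ u : {u // u ∈ T}, (Pr.mulVec x) u := by
        rw [hμ', ← Finset.univ_eq_attach]
    _ = ∑ u : {u // u ∈ T}, ∑ i, Pr u i * x i := rfl
    _ = ∑ i, ∑ u : {u // u ∈ T}, Pr u i * x i := Finset.sum_comm
    _ = ∑ i, x i * ((∑ u, P u i : ℚ) : ℝ) := by
        refine Finset.sum_congr rfl fun i _ => ?_
        push_cast
        rw [Finset.mul_sum]
        refine Finset.sum_congr rfl fun u _ => ?_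
        simp [Pr, Matrix.map_apply, mul_comm]

end GaugeDefectAux

section Main

open GaugeDefectAux

variable {N : ℕ}

/-- minimality: the gauge is at most the total mass of any nonneg representation -/
lemma gauge_le_totalmass {F : Finset (Fin N → ℚ)} {Q : Set (Fin N → ℝ)}
    (hQF : Q = convexHull ℝ (cQ N '' ↑F)) {T : Finset (Fin N → ℚ)} (hT : T ⊆ F)
    {ν : (Fin N → ℚ) → ℝ} (hν : ∀ u ∈ T, 0 ≤ ν u) {x : Fin N → ℝ}
    (hrep : ∑ u ∈ T, ν u • cQ N u = x) :
    gauge Q x ≤ ∑ u ∈ T, ν u := by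
  classical
  set s := ∑ u ∈ T, ν u with hs
  have hs0 : 0 ≤ s := Finset.sum_nonneg hν
  rcases hs0.eq_or_lt with h | h
  · have hzero : ∀ u ∈ T, ν u = 0 :=
      (Finset.sum_eq_zero_iff_of_nonneg hν).1 h.symm
    have hx : x = 0 := by
      rw [← hrep]
      exact Finset.sum_eq_zero fun u hu => by rw [hzero u hu, zero_smul]
    rw [hx, gauge_zero]
    exact hs0
  · have hmem : T.centerMass ν (cQ N) ∈ convexHull ℝ (cQ N '' ↑F) :=
      T.centerMass_mem_convexHull hν h fun u hu => Set.mem_image_of_mem _ (hT hu)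
    have hcm : T.centerMass ν (cQ N) = s⁻¹ • x := by
      rw [Finset.centerMass, ← hs, hrep]
    have hxmem : x ∈ s • Q := by
      rw [hQF]
      exact ⟨s⁻¹ • x, hcm ▸ hmem, smul_inv_smul₀ h.ne' x⟩
    exact gauge_le_of_mem hs0 hxmem

/-- the reduction to an independent support -/
lemma reduce_indep {F : Finset (Fin N → ℚ)} {Q : Set (Fin N → ℝ)}
    (hQF : Q = convexHull ℝ (cQ N '' ↑F)) {x : Fin N → ℝ} :
    ∀ n (T : Finset (Fin N → ℚ)), T.card ≤ n → T ⊆ F →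
      ∀ μ : (Fin N → ℚ) → ℝ, (∀ u ∈ T, 0 ≤ μ u) → ∑ u ∈ T, μ u • cQ N u = x →
      ∑ u ∈ T, μ u = gauge Q x →
      ∃ T' : Finset (Fin N → ℚ), T' ⊆ F ∧ Indep T' ∧
        ∃ μ' : (Fin N → ℚ) → ℝ, (∀ u ∈ T', 0 ≤ μ' u) ∧
          ∑ u ∈ T', μ' u • cQ N u = x ∧ ∑ u ∈ T', μ' u = gauge Q x := by
  classical
  intro n
  induction n with
  | zero =>
    intro T hcard hTF μ hμ hrep hsum
    have hT : T = ∅ := Finset.card_eq_zero.1 (Nat.le_zero.1 hcard)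
    subst hT
    exact ⟨∅, Finset.empty_subset _, fun g _ u hu => absurd hu (by simp),
      μ, by simp, hrep, hsum⟩
  | succ n ih =>
    intro T hcard hTF μ hμ hrep hsum
    by_cases hz : ∃ u ∈ T, μ u = 0
    · obtain ⟨u₀, hu₀, hμ0⟩ := hz
      have h1 : ∑ u ∈ T.erase u₀, μ u • cQ N u = x := by
        rw [Finset.sum_erase _ (by rw [hμ0, zero_smul]), hrep]
      have h2 : ∑ u ∈ T.erase u₀, μ u = gauge Q x := by
        rw [Finset.sum_erase _ hμ0, hsum]
      exact ih (T.erase u₀)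
        (Nat.le_of_lt_succ ((Finset.card_erase_lt_of_mem hu₀).trans_le hcard))
        ((Finset.erase_subset _ _).trans hTF)
        μ (fun u hu => hμ u (Finset.mem_of_mem_erase hu)) h1 h2
    · push_neg at hz
      have hμpos : ∀ u ∈ T, 0 < μ u := fun u hu => (hμ u hu).lt_of_ne' (hz u hu)
      by_cases hI : Indep T
      · exact ⟨T, hTF, hI, μ, hμ, hrep, hsum⟩
      · rw [Indep] at hI
        push_neg at hI
        obtain ⟨g, hg0, u₀, hu₀, hgu₀⟩ := hI
        -- no direction can strictly decrease the total mass
        have key : ∀ h : (Fin N → ℚ) → ℝ, ∑ u ∈ T, h u • cQ N u = 0 →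
            ¬ (∑ u ∈ T, h u < 0) := by
          intro h hh hneg
          -- pick small t > 0 with μ + t h ≥ 0 on T
          have hTne : T.Nonempty := ⟨u₀, hu₀⟩
          set t : ℝ := (T.image fun u => μ u / (1 + |h u|)).min' (hTne.image _) with ht
          have htmem := (T.image fun u => μ u / (1 + |h u|)).min'_mem (hTne.image _)
          rw [Finset.mem_image] at htmem
          obtain ⟨w, hw, hwt⟩ := htmem
          have htpos : 0 < t := by
            rw [ht, ← hwt]
            exact div_pos (hμpos w hw) (by positivity)
          have htle : ∀ u ∈ T, t ≤ μ u / (1 + |h u|) := fun u hu =>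
            Finset.min'_le _ _ (Finset.mem_image_of_mem _ hu)
          set ν : (Fin N → ℚ) → ℝ := fun u => μ u + t * h u with hν
          have hνnn : ∀ u ∈ T, 0 ≤ ν u := by
            intro u hu
            have h1 : t * |h u| ≤ μ u := by
              have h5 := htle u hu
              have h2 : 0 < 1 + |h u| := by positivity
              rw [le_div_iff₀ h2] at h5
              nlinarith [abs_nonneg (h u), h5]
            have h3 : t * (-|h u|) ≤ t * h u :=
              mul_le_mul_of_nonneg_left (neg_abs_le (h u)) htpos.le
            have h4 : t * (-|h u|) = -(t * |h u|) := by ring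
            simp only [hν]
            linarith
          have hνrep : ∑ u ∈ T, ν u • cQ N u = x := by
            have : ∑ u ∈ T, ν u • cQ N u
                = (∑ u ∈ T, μ u • cQ N u) + t • (∑ u ∈ T, h u • cQ N u) := by
              rw [Finset.smul_sum, ← Finset.sum_add_distrib]
              refine Finset.sum_congr rfl fun u hu => ?_
              rw [hν]
              simp [add_smul, smul_smul]
            rw [this, hrep, hh, smul_zero, add_zero]
          have hle := gauge_le_totalmass hQF hTF hνnn hνrep
          have : ∑ u ∈ T, ν u = (∑ u ∈ T, μ u) + t * ∑ u ∈ T, h u := by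
            rw [Finset.mul_sum, ← Finset.sum_add_distrib]
          rw [this, hsum] at hle
          nlinarith [htpos, hneg]
        -- hence the dependence has zero total mass
        have hσ : ∑ u ∈ T, g u = 0 := by
          by_contra hσ
          rcases Ne.lt_or_gt hσ with h | h
          · exact key g hg0 h
          · refine key (fun u => -g u) ?_ ?_
            · have e1 : ∑ u ∈ T, (-g u) • cQ N u = -∑ u ∈ T, g u • cQ N u := by
                rw [← Finset.sum_neg_distrib]
                exact Finset.sum_congr rfl fun u _ => neg_smul _ _
              rw [e1, hg0, neg_zero]
            · rw [Finset.sum_neg_distrib]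
              linarith
        -- there is a strictly positive coefficient
        have hpos : ∃ u ∈ T, 0 < g u := by
          by_contra hcon
          push_neg at hcon
          have : ∀ u ∈ T, g u = 0 := by
            intro u hu
            have := (Finset.sum_eq_zero_iff_of_nonpos hcon).1 hσ
            exact this u hu
          exact hgu₀ (this u₀ hu₀)
        obtain ⟨u₁, hu₁, hgu₁⟩ := hpos
        set S := T.filter fun u => 0 < g u with hS
        have hSne : S.Nonempty := ⟨u₁, Finset.mem_filter.2 ⟨hu₁, hgu₁⟩⟩
        set t : ℝ := (S.image fun u => μ u / g u).min' (hSne.image _) with ht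
        have htmem := (S.image fun u => μ u / g u).min'_mem (hSne.image _)
        rw [Finset.mem_image] at htmem
        obtain ⟨w, hw, hwt⟩ := htmem
        have hwT : w ∈ T := (Finset.mem_filter.1 hw).1
        have hgw : 0 < g w := (Finset.mem_filter.1 hw).2
        have htpos : 0 < t := by
          rw [ht, ← hwt]
          exact div_pos (hμpos w hwT) hgw
        have htle : ∀ u ∈ S, t ≤ μ u / g u := fun u hu =>
          Finset.min'_le _ _ (Finset.mem_image_of_mem _ hu)
        set ν : (Fin N → ℚ) → ℝ := fun u => μ u - t * g u with hν
        have hνnn : ∀ u ∈ T, 0 ≤ ν u := by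
          intro u hu
          rcases le_or_gt (g u) 0 with h | h
          · have := hμ u hu
            have : 0 ≤ μ u - t * g u := by nlinarith
            exact this
          · have huS : u ∈ S := Finset.mem_filter.2 ⟨hu, h⟩
            have := htle u huS
            rw [le_div_iff₀ h] at this
            simp only [hν]
            linarith
        have hνw : ν w = 0 := by
          simp only [hν]
          rw [ht, ← hwt]
          field_simp
          ring
        have hνrep : ∑ u ∈ T, ν u • cQ N u = x := by
          have : ∑ u ∈ T, ν u • cQ N u
              = (∑ u ∈ T, μ u • cQ N u) - t • (∑ u ∈ T, g u • cQ N u) := by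
            rw [Finset.smul_sum, ← Finset.sum_sub_distrib]
            refine Finset.sum_congr rfl fun u hu => ?_
            simp [hν, sub_smul, smul_smul]
          rw [this, hrep, hg0, smul_zero, sub_zero]
        have hνsum : ∑ u ∈ T, ν u = gauge Q x := by
          have : ∑ u ∈ T, ν u = (∑ u ∈ T, μ u) - t * ∑ u ∈ T, g u := by
            rw [Finset.mul_sum, ← Finset.sum_sub_distrib]
          rw [this, hσ, hsum, mul_zero, sub_zero]
        -- drop w
        have h1 : ∑ u ∈ T.erase w, ν u • cQ N u = x := by
          rw [Finset.sum_erase _ (by rw [hνw, zero_smul]), hνrep]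
        have h2 : ∑ u ∈ T.erase w, ν u = gauge Q x := by
          rw [Finset.sum_erase _ hνw, hνsum]
        exact ih (T.erase w)
          (Nat.le_of_lt_succ ((Finset.card_erase_lt_of_mem hwT).trans_le hcard))
          ((Finset.erase_subset _ _).trans hTF)
          ν (fun u hu => hνnn u (Finset.mem_of_mem_erase hu)) h1 h2

end Main


section Main2

open GaugeDefectAux

variable {N : ℕ}

lemma exists_rep {F : Finset (Fin N → ℚ)} {Q : Set (Fin N → ℝ)}
    (hQF : Q = convexHull ℝ (cQ N '' ↑F)) (h0 : (0 : Fin N → ℝ) ∈ interior Q)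
    (x : Fin N → ℝ) :
    ∃ T : Finset (Fin N → ℚ), T ⊆ F ∧ Indep T ∧
      ∃ μ : (Fin N → ℚ) → ℝ, (∀ u ∈ T, 0 ≤ μ u) ∧
        ∑ u ∈ T, μ u • cQ N u = x ∧ ∑ u ∈ T, μ u = gauge Q x := by
  classical
  have hQconv : Convex ℝ Q := hQF ▸ convex_convexHull ℝ _
  have hQnhds : Q ∈ nhds 0 := mem_interior_iff_mem_nhds.1 h0
  have habs : Absorbent ℝ Q := absorbent_nhds_zero hQnhds
  have hcomp : IsCompact Q := hQF ▸ (F.finite_toSet.image (cQ N)).isCompact_convexHull ℝ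
  have hclosed : IsClosed Q := hcomp.isClosed
  have hbdd : Bornology.IsVonNBounded ℝ Q := by
    rw [NormedSpace.isVonNBounded_iff]
    exact hcomp.isBounded
  by_cases hx : x = 0
  · subst hx
    exact ⟨∅, Finset.empty_subset _, fun g _ u hu => absurd hu (by simp),
      0, by simp, by simp, by simp [gauge_zero]⟩
  · have hd : 0 < gauge Q x := (gauge_pos habs hbdd).2 hx
    set d := gauge Q x with hddef
    have h1 : gauge Q (d⁻¹ • x) ≤ 1 := by
      rw [gauge_smul_of_nonneg (inv_nonneg.2 hd.le), smul_eq_mul, ← hddef,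
        inv_mul_cancel₀ hd.ne']
    have hmem : d⁻¹ • x ∈ Q := by
      have := (gauge_le_one_iff_mem_closure hQconv hQnhds).1 h1
      rwa [hclosed.closure_eq] at this
    rw [hQF, show cQ N '' ↑F = ↑(F.image (cQ N)) by rw [Finset.coe_image],
      Finset.convexHull_eq] at hmem
    obtain ⟨w, hw0, hw1, hwc⟩ := hmem
    have hwc' : ∑ y ∈ F.image (cQ N), w y • y = d⁻¹ • x := by
      rw [Finset.centerMass_eq_of_sum_1 _ id hw1] at hwc
      simpa using hwc
    have hinj : ∀ a ∈ F, ∀ b ∈ F, cQ N a = cQ N b → a = b := fun a _ b _ h => cQ_inj h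
    set μ : (Fin N → ℚ) → ℝ := fun u => d * w (cQ N u) with hμdef
    have hμ0 : ∀ u ∈ F, 0 ≤ μ u := fun u hu =>
      mul_nonneg hd.le (hw0 _ (Finset.mem_image_of_mem _ hu))
    have hrep : ∑ u ∈ F, μ u • cQ N u = x := by
      have e1 : ∑ u ∈ F, w (cQ N u) • cQ N u = ∑ y ∈ F.image (cQ N), w y • y :=
        (Finset.sum_image (f := fun y => w y • y) hinj).symm
      calc ∑ u ∈ F, μ u • cQ N u
          = d • ∑ u ∈ F, w (cQ N u) • cQ N u := by
            rw [Finset.smul_sum]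
            exact Finset.sum_congr rfl fun u _ => by rw [hμdef]; rw [mul_smul]
        _ = d • (d⁻¹ • x) := by rw [e1, hwc']
        _ = x := smul_inv_smul₀ hd.ne' x
    have hsum : ∑ u ∈ F, μ u = gauge Q x := by
      have e1 : ∑ u ∈ F, w (cQ N u) = ∑ y ∈ F.image (cQ N), w y :=
        (Finset.sum_image (f := fun y => w y) hinj).symm
      calc ∑ u ∈ F, μ u = d * ∑ u ∈ F, w (cQ N u) := by
            rw [Finset.mul_sum]
        _ = d * 1 := by rw [e1, hw1]
        _ = gauge Q x := by rw [mul_one]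
    obtain ⟨T', hT'F, hT'I, hres⟩ :=
      reduce_indep hQF F.card F le_rfl (Finset.Subset.refl F) μ hμ0 hrep hsum
    exact ⟨T', hT'F, hT'I, hres⟩

lemma int_of_den_dvd {q : ℚ} {D : ℕ} (h : q.den ∣ D) :
    ∃ z : ℤ, (z : ℝ) = (D : ℝ) * (q : ℝ) := by
  obtain ⟨c, hc⟩ := h
  refine ⟨(c : ℤ) * q.num, ?_⟩
  have hq : (q : ℝ) = (q.num : ℝ) / (q.den : ℝ) := by rw [Rat.cast_def]
  have hden : ((q.den : ℝ)) ≠ 0 := by exact_mod_cast q.den_nz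
  rw [hq, hc]
  push_cast
  field_simp

lemma exists_denom {F : Finset (Fin N → ℚ)} {Q : Set (Fin N → ℝ)}
    (hQF : Q = convexHull ℝ (cQ N '' ↑F)) (h0 : (0 : Fin N → ℝ) ∈ interior Q) :
    ∃ D : ℕ, 0 < D ∧ ∀ m : Fin N → ℤ,
      ∃ k : ℤ, (k : ℝ) = (D : ℝ) * gauge Q (fun i => (m i : ℝ)) := by
  classical
  refine ⟨∏ T ∈ F.powerset, denOf T, Finset.prod_pos fun T _ => denOf_pos T, ?_⟩
  set D := ∏ T ∈ F.powerset, denOf T with hD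
  intro m
  set x : Fin N → ℝ := fun i => (m i : ℝ) with hx
  obtain ⟨T, hTF, hTI, μ, hμ0, hrep, hsum⟩ := exists_rep hQF h0 x
  have h : ∃ P : Matrix {u // u ∈ T} (Fin N) ℚ, P * matOf T = 1 := exists_leftInv hTI
  have hform : ∑ u ∈ T, μ u = ∑ i, x i * ((∑ u, h.choose u i : ℚ) : ℝ) :=
    sum_eq_beta h.choose_spec hrep
  have hbeta : ∀ i, betaOf T i = ∑ u, h.choose u i := by
    intro i
    rw [betaOf, dif_pos h]
  have hform' : gauge Q x = ∑ i, x i * ((betaOf T i : ℚ) : ℝ) := by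
    rw [← hsum, hform]
    exact Finset.sum_congr rfl fun i _ => by rw [hbeta i]
  have hdvd : ∀ i, (betaOf T i).den ∣ D := by
    intro i
    refine dvd_trans ?_ (Finset.dvd_prod_of_mem denOf (Finset.mem_powerset.2 hTF))
    exact Finset.dvd_prod_of_mem (fun i => (betaOf T i).den) (Finset.mem_univ i)
  choose z hz using fun i => int_of_den_dvd (hdvd i)
  refine ⟨∑ i, m i * z i, ?_⟩
  rw [hform', Finset.mul_sum]
  push_cast
  refine Finset.sum_congr rfl fun i _ => ?_
  rw [hz i, hx]
  push_cast
  ring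

lemma polyGauge_eq_gauge {Q : Set (Fin N → ℝ)} (hne : Q.Nonempty) (x : Fin N → ℝ) :
    polyGauge Q x = gauge Q x := by
  by_cases hx : x = 0
  · subst hx
    rw [gauge_zero]
    have hmem : (0 : ℝ) ∈ {t : ℝ | 0 ≤ t ∧ (0 : Fin N → ℝ) ∈ t • Q} :=
      ⟨le_refl 0, by rw [Set.zero_smul_set hne]; exact rfl⟩
    refine le_antisymm (csInf_le ⟨0, fun t ht => ht.1⟩ hmem) ?_
    exact le_csInf ⟨0, hmem⟩ fun t ht => ht.1
  · have hset : {t : ℝ | 0 ≤ t ∧ x ∈ t • Q} = {t : ℝ | 0 < t ∧ x ∈ t • Q} := by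
      ext t
      refine ⟨fun ⟨ht, hm⟩ => ⟨?_, hm⟩, fun ⟨ht, hm⟩ => ⟨ht.le, hm⟩⟩
      rcases ht.eq_or_lt with h | h
      · exfalso
        rw [← h, Set.zero_smul_set hne] at hm
        exact hx hm
      · exact h
    rw [polyGauge, hset]
    rfl

lemma ceil_sub_le {d : ℝ} {D : ℕ} (hD : 0 < D) {k : ℤ} (hk : (k : ℝ) = (D : ℝ) * d) :
    (⌈d⌉ : ℝ) - d ≤ 1 - 1 / (D : ℝ) := by
  have hD' : (0 : ℝ) < D := by exact_mod_cast hD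
  have h1 : (⌈d⌉ : ℝ) < d + 1 := Int.ceil_lt_add_one d
  have h2 : ((D : ℤ) * ⌈d⌉ - D : ℤ) < k := by
    have : ((D : ℤ) * ⌈d⌉ - D : ℝ) < (k : ℝ) := by
      rw [hk]
      push_cast
      nlinarith
    exact_mod_cast this
  have h4 : (D : ℤ) * ⌈d⌉ ≤ k + D - 1 := by omega
  have h5 : (D : ℝ) * (⌈d⌉ : ℝ) ≤ (k : ℝ) + D - 1 := by exact_mod_cast h4
  rw [hk] at h5
  have h6 : (1 : ℝ) / D * D = 1 := by field_simp
  nlinarith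

end Main2

theorem gauge_defect_lt_one_and_gap {N : ℕ} (Q : Set (Fin N → ℝ))
    (hQ : ∃ F : Finset (Fin N → ℚ),
      Q = convexHull ℝ ((fun (v : Fin N → ℚ) (i : Fin N) => (v i : ℝ)) '' ↑F))
    (h0 : (0 : Fin N → ℝ) ∈ interior Q) :
    sSup (Set.range fun m : Fin N → ℤ =>
        ((⌈polyGauge Q (fun i => (m i : ℝ))⌉ : ℝ) - polyGauge Q (fun i => (m i : ℝ)))) < 1 ∧
    (sSup (Set.range fun m : Fin N → ℤ =>
        ((⌈polyGauge Q (fun i => (m i : ℝ))⌉ : ℝ) - polyGauge Q (fun i => (m i : ℝ)))) = 0 ∨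
      (1 / 2 : ℝ) ≤ sSup (Set.range fun m : Fin N → ℤ =>
        ((⌈polyGauge Q (fun i => (m i : ℝ))⌉ : ℝ) - polyGauge Q (fun i => (m i : ℝ))))) := by
  classical
  obtain ⟨F, hQF⟩ := hQ
  have hQF' : Q = convexHull ℝ (GaugeDefectAux.cQ N '' ↑F) := hQF
  have hne : Q.Nonempty := ⟨0, interior_subset h0⟩
  have hbr : ∀ x, polyGauge Q x = gauge Q x := polyGauge_eq_gauge hne
  obtain ⟨D, hD, hform⟩ := exists_denom hQF' h0
  set f : (Fin N → ℤ) → ℝ := fun m =>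
    ((⌈polyGauge Q (fun i => (m i : ℝ))⌉ : ℝ) - polyGauge Q (fun i => (m i : ℝ))) with hf
  have hDpos : (0:ℝ) < 1 / (D:ℝ) := by
    have : (0:ℝ) < (D:ℝ) := by exact_mod_cast hD
    positivity
  have hub : ∀ m, f m ≤ 1 - 1 / (D:ℝ) := by
    intro m
    obtain ⟨k, hk⟩ := hform m
    simp only [hf, hbr]
    exact ceil_sub_le hD hk
  have hBdd : BddAbove (Set.range f) :=
    ⟨1 - 1/(D:ℝ), by rintro y ⟨m, rfl⟩; exact hub m⟩
  have hne' : (Set.range f).Nonempty := Set.range_nonempty f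
  have hlt : sSup (Set.range f) < 1 := by
    have := csSup_le hne' (by rintro y ⟨m, rfl⟩; exact hub m)
    linarith
  have hzero_mem : (0:ℝ) ∈ Set.range f := by
    refine ⟨0, ?_⟩
    have hx0 : (fun i => (((0 : Fin N → ℤ) i : ℤ) : ℝ)) = (0 : Fin N → ℝ) := by
      funext i; simp
    simp only [hf]
    rw [hx0, hbr, gauge_zero]
    simp
  have hge0 : 0 ≤ sSup (Set.range f) := le_csSup hBdd hzero_mem
  have hdouble : ∀ m : Fin N → ℤ, 0 < f m → f m < 1/2 →
      f (fun i => 2 * m i) = 2 * f m := by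
    intro m h1 h2
    set x : Fin N → ℝ := fun i => (m i : ℝ) with hx
    have hcast : (fun i => ((2 * m i : ℤ) : ℝ)) = (2:ℝ) • x := by
      funext i
      push_cast
      simp [hx]
    have hgx : gauge Q ((2:ℝ) • x) = 2 * gauge Q x := by
      rw [gauge_smul_of_nonneg (by norm_num : (0:ℝ) ≤ 2), smul_eq_mul]
    set d := gauge Q x with hd
    have h1' : 0 < (⌈d⌉:ℝ) - d := by
      have : f m = (⌈d⌉:ℝ) - d := by simp only [hf, hbr]; rfl
      linarith [this ▸ h1]
    have h2' : (⌈d⌉:ℝ) - d < 1/2 := by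
      have : f m = (⌈d⌉:ℝ) - d := by simp only [hf, hbr]; rfl
      linarith [this ▸ h2]
    have hceil : ⌈2 * d⌉ = 2 * ⌈d⌉ := by
      rw [Int.ceil_eq_iff]
      constructor
      · push_cast
        linarith
      · push_cast
        linarith
    have hfm : f m = (⌈d⌉:ℝ) - d := by simp only [hf, hbr]; rfl
    have : f (fun i => 2 * m i) = (⌈2 * d⌉ : ℝ) - 2 * d := by
      simp only [hf, hbr]
      rw [hcast, hgx]
    rw [this, hceil, hfm]
    push_cast
    ring
  refine ⟨hlt, ?_⟩
  rcases lt_or_ge (sSup (Set.range f)) (1/2) with hC | hC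
  · left
    by_contra hne0
    have hCpos : 0 < sSup (Set.range f) := lt_of_le_of_ne hge0 (Ne.symm hne0)
    obtain ⟨y, hy_mem, hy⟩ := exists_lt_of_lt_csSup hne' (half_lt_self hCpos)
    obtain ⟨m, rfl⟩ := hy_mem
    have hfmle : f m ≤ sSup (Set.range f) := le_csSup hBdd ⟨m, rfl⟩
    have h1 : 0 < f m := lt_trans (by linarith) hy
    have h2 : f m < 1/2 := lt_of_le_of_lt hfmle hC
    have hdm := hdouble m h1 h2
    have hle2 : f (fun i => 2 * m i) ≤ sSup (Set.range f) :=
      le_csSup hBdd ⟨_, rfl⟩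
    rw [hdm] at hle2
    have hy' : sSup (Set.range f) / 2 < f m := hy
    have hle2' : 2 * f m ≤ sSup (Set.range f) := hle2
    set A := sSup (Set.range f) with hA
    set B := f m with hB
    clear_value A B
    clear * - hy' hle2'
    linarith
  · right
    exact hC
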